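/- A topological algebra 𝐀 = (A, E) of type Ω is profinite if and only if A is a Stone space (totally disconnected compact Hausdorff) and the translation monoid M(𝐀) is equicontinuous with respect to the unique uniformity of A. -/

import Mathlib

open Set Filter Topology Uniformity

/-- A translation of the `Ω`-algebra `(A, E)`. -/
def IsTranslation {Ω : ℕ → Type} {A : Type} (E : ∀ n, Ω n → (Fin n → A) → A)
    (g : A → A) : Prop :=
  ∃ (n : ℕ) (ω : Ω n) (i : Fin n) (a : Fin n → A),
    g = fun x => E n ω (Function.update a i x)

/-- Membership in the translation monoid `M(𝐀)`. -/
inductive InTransMonoid {Ω : ℕ → Type} {A : Type} (E : ∀ n, Ω n → (Fin n → A) → A) :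
    (A → A) → Prop
  | id : InTransMonoid E (fun x => x)
  | comp {g f : A → A} : IsTranslation E g → InTransMonoid E f → InTransMonoid E (g ∘ f)

/-- A continuous homomorphism from the topological `Ω`-algebra `(A, E)` onto a finite
discrete topological `Ω`-algebra. -/
structure FinQuot (Ω : ℕ → Type) [∀ n, TopologicalSpace (Ω n)]
    (A : Type) [TopologicalSpace A] (E : ∀ n, Ω n → (Fin n → A) → A) where
  B : Type
  [tB : TopologicalSpace B]
  [finB : Finite B]
  [discB : DiscreteTopology B]
  op : ∀ n, Ω n → (Fin n → B) → B
  contOp : ∀ n, Continuous fun p : Ω n × (Fin n → B) => op n p.1 p.2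
  toFun : A → B
  cont : Continuous toFun
  hom : ∀ (n : ℕ) (ω : Ω n) (a : Fin n → A), toFun (E n ω a) = op n ω fun i => toFun (a i)

/-- A topological `Ω`-algebra is profinite if it is compact and residually finite. -/
def IsProfinite (Ω : ℕ → Type) [∀ n, TopologicalSpace (Ω n)]
    (A : Type) [TopologicalSpace A] (E : ∀ n, Ω n → (Fin n → A) → A) : Prop :=
  CompactSpace A ∧ ∀ x y : A, x ≠ y → ∃ q : FinQuot Ω A E, q.toFun x ≠ q.toFun y

section Aux

variable {Ω : ℕ → Type} {A : Type} {E : ∀ n, Ω n → (Fin n → A) → A}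

/-- The translation monoid is closed under right composition by translations. -/
lemma InTransMonoid.comp_right {f g : A → A} (hf : InTransMonoid E f)
    (hg : IsTranslation E g) : InTransMonoid E (f ∘ g) := by
  induction hf with
  | id => exact show InTransMonoid E (g ∘ fun x => x) from InTransMonoid.comp hg InTransMonoid.id
  | @comp g' f' hg' _ ih =>
    exact show InTransMonoid E (g' ∘ (f' ∘ g)) from InTransMonoid.comp hg' ih

lemma update_comp {B : Type} (q : A → B) {n : ℕ} (a : Fin n → A) (i : Fin n) (x : A) :
    (fun j => q (Function.update a i x j)) = Function.update (fun j => q (a j)) i (q x) := by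
  funext j
  rcases eq_or_ne j i with h | h
  · subst h; simp
  · simp [Function.update_of_ne h]

variable [∀ n, TopologicalSpace (Ω n)] [TopologicalSpace A]

/-- Finite quotients are invariant under the translation monoid. -/
lemma FinQuot.pres (q : FinQuot Ω A E) {f : A → A} (hf : InTransMonoid E f) {a b : A}
    (hab : q.toFun a = q.toFun b) : q.toFun (f a) = q.toFun (f b) := by
  induction hf with
  | id => exact hab
  | @comp g f hg _ ih =>
    obtain ⟨n, ω, i, c, rfl⟩ := hg
    show q.toFun (E n ω (Function.update c i (f a))) = q.toFun (E n ω (Function.update c i (f b)))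
    rw [q.hom, q.hom, update_comp, update_comp, ih]

end Aux

theorem statement6 (Ω : ℕ → Type) [∀ n, TopologicalSpace (Ω n)]
    (A : Type) [tA : TopologicalSpace A] (E : ∀ n, Ω n → (Fin n → A) → A)
    (hE : ∀ n, Continuous fun p : Ω n × (Fin n → A) => E n p.1 p.2) :
    IsProfinite Ω A E ↔
      (CompactSpace A ∧ T2Space A ∧ TotallyDisconnectedSpace A ∧
        ∀ u : UniformSpace A, u.toTopologicalSpace = tA →
          @Equicontinuous {f : A → A // InTransMonoid E f} A A tA u
            (fun f => (f : {f : A → A // InTransMonoid E f}).1)) := by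
  constructor
  · rintro ⟨hC, hsep⟩
    haveI := hC
    have ht2 : T2Space A := by
      refine ⟨fun x y hxy => ?_⟩
      obtain ⟨q, hq⟩ := hsep x y hxy
      letI := q.tB; letI := q.finB; letI := q.discB
      exact separated_by_continuous q.cont hq
    haveI := ht2
    refine ⟨hC, ht2, ⟨fun t _ ht => ?_⟩, ?_⟩
    · intro x hx y hy
      by_contra hxy
      obtain ⟨q, hq⟩ := hsep x y hxy
      letI := q.tB; letI := q.finB; letI := q.discB
      have hsub : (q.toFun '' t).Subsingleton :=
        (ht.image q.toFun q.cont.continuousOn).subsingleton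
      exact hq (hsub (mem_image_of_mem _ hx) (mem_image_of_mem _ hy))
    · intro u hu
      subst hu
      intro x₀ V hV
      -- V is a neighborhood of the diagonal
      have hVd : V ∈ 𝓝ˢ (diagonal A) := by
        rwa [nhdsSet_diagonal_eq_uniformity]
      have hVint : diagonal A ⊆ interior V := subset_interior_iff_mem_nhdsSet.2 hVd
      -- the separating sets
      set S : FinQuot Ω A E → Set (A × A) :=
        fun q => {p : A × A | q.toFun p.1 = q.toFun p.2} with hS
      have hSopen : ∀ q, IsOpen (S q) := by
        intro q
        letI := q.tB; letI := q.finB; letI := q.discB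
        have : S q = ⋃ b : q.B, (q.toFun ⁻¹' {b}) ×ˢ (q.toFun ⁻¹' {b}) := by
          ext p
          simp only [hS, mem_setOf_eq, mem_iUnion, mem_prod, mem_preimage, mem_singleton_iff]
          exact ⟨fun h => ⟨q.toFun p.2, h, rfl⟩, fun ⟨b, h1, h2⟩ => h1.trans h2.symm⟩
        rw [this]
        exact isOpen_iUnion fun b => (((isOpen_discrete _).preimage q.cont).prod
          ((isOpen_discrete _).preimage q.cont))
      have hSclosed : ∀ q, IsClosed (S q) := by
        intro q
        letI := q.tB; letI := q.finB; letI := q.discB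
        have : S q = (fun p : A × A => (q.toFun p.1, q.toFun p.2)) ⁻¹' (diagonal q.B) := by
          ext p; simp [hS, diagonal, eq_comm]
        rw [this]
        exact isClosed_diagonal.preimage ((q.cont.comp continuous_fst).prodMk
          (q.cont.comp continuous_snd))
      -- compactness argument
      have hK : IsCompact ((interior V)ᶜ) := isOpen_interior.isClosed_compl.isCompact
      have hcover : (interior V)ᶜ ⊆ ⋃ q : FinQuot Ω A E, (S q)ᶜ := by
        rintro ⟨a, b⟩ hp
        have hab : a ≠ b := by
          rintro rfl
          exact hp (hVint rfl)
        obtain ⟨q, hq⟩ := hsep a b hab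
        exact mem_iUnion.2 ⟨q, hq⟩
      obtain ⟨t, ht⟩ := hK.elim_finite_subcover (fun q => (S q)ᶜ)
        (fun q => (hSclosed q).isOpen_compl) hcover
      have hinter : (⋂ q ∈ t, S q) ⊆ V := by
        intro p hp
        by_contra hpV
        have hpK : p ∈ (interior V)ᶜ := fun h => hpV (interior_subset h)
        obtain ⟨q, hqt, hq⟩ := by simpa using ht hpK
        exact hq (by simpa using mem_iInter₂.1 hp q hqt)
      -- the neighborhood
      have hU : ∀ᶠ x in 𝓝 x₀, ∀ q ∈ t, q.toFun x = q.toFun x₀ := by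
        have : IsOpen {x | ∀ q ∈ t, q.toFun x = q.toFun x₀} := by
          have : {x | ∀ q ∈ t, q.toFun x = q.toFun x₀} =
              ⋂ q ∈ t, q.toFun ⁻¹' {q.toFun x₀} := by
            ext x; simp
          rw [this]
          refine isOpen_biInter_finset fun q _ => ?_
          letI := q.tB; letI := q.finB; letI := q.discB
          exact (isOpen_discrete _).preimage q.cont
        exact this.mem_nhds (by simp)
      filter_upwards [hU] with x hx f
      refine hinter (mem_iInter₂.2 fun q hq => ?_)
      exact (q.pres f.2 (hx q hq).symm)
  · rintro ⟨hC, hT2, hTD, hEq⟩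
    haveI := hC; haveI := hT2; haveI := hTD
    refine ⟨hC, fun x y hxy => ?_⟩
    letI u : UniformSpace A := uniformSpaceOfCompactR1
    have hEq' := hEq u rfl
    have hUE : UniformEquicontinuous
        (fun f : {f : A → A // InTransMonoid E f} => (f : {f : A → A // InTransMonoid E f}).1) :=
      CompactSpace.uniformEquicontinuous_of_equicontinuous hEq'
    -- the separating open neighborhood of the diagonal
    have hW : ({((x : A), y)}ᶜ : Set (A × A)) ∈ 𝓤 A := by
      rw [← nhdsSet_diagonal_eq_uniformity]
      refine (isClosed_singleton.isOpen_compl).mem_nhdsSet.2 ?_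
      rintro ⟨a, b⟩ (rfl : a = b)
      simp only [mem_compl_iff, mem_singleton_iff, Prod.mk.injEq, not_and]
      rintro rfl rfl; exact hxy rfl
    -- extract a finite clopen cover refining W
    obtain ⟨ι, hι, C, hCclopen, hCcover, hCsub⟩ :
        ∃ (ι : Type) (_ : Fintype ι) (C : ι → Set A), (∀ i, IsClopen (C i)) ∧
          (∀ a : A, ∃ i, a ∈ C i) ∧
          ∀ p : A × A, (∀ i, p.1 ∈ C i ↔ p.2 ∈ C i) → p ∈ ({((x : A), y)}ᶜ : Set (A × A)) := by
      set W : Set (A × A) := {((x : A), y)}ᶜ with hWdef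
      have hWd : W ∈ 𝓝ˢ (diagonal A) := by rwa [nhdsSet_diagonal_eq_uniformity]
      have hWnhds : ∀ a : A, W ∈ 𝓝 (a, a) := fun a =>
        mem_nhdsSet_iff_forall.1 hWd (a, a) rfl
      have key : ∀ a : A, ∃ D : Set A, a ∈ D ∧ IsClopen D ∧ D ×ˢ D ⊆ W := by
        intro a
        rcases mem_nhds_prod_iff.1 (hWnhds a) with ⟨s, hs, tt, htt, hst⟩
        rcases (nhds_basis_clopen a).mem_iff.1 (inter_mem hs htt) with ⟨D, ⟨haD, hD⟩, hDsub⟩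
        exact ⟨D, haD, hD, fun p hp => hst ⟨(hDsub hp.1).1, (hDsub hp.2).2⟩⟩
      choose D hD1 hD2 hD3 using key
      have hcov : univ ⊆ ⋃ a : A, D a := fun a _ => mem_iUnion.2 ⟨a, hD1 a⟩
      obtain ⟨t, ht⟩ := isCompact_univ.elim_finite_subcover D (fun a => (hD2 a).2) hcov
      refine ⟨t, inferInstance, fun i => D i, fun i => hD2 i, ?_, ?_⟩
      · intro a
        obtain ⟨i, hit, hai⟩ := by simpa using ht (mem_univ a)
        exact ⟨⟨i, hit⟩, hai⟩
      · rintro ⟨a, b⟩ hp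
        obtain ⟨i, hit, hai⟩ := by simpa using ht (mem_univ a)
        exact hD3 i ⟨hai, (hp ⟨i, hit⟩).1 hai⟩
    haveI := hι
    -- the clopen equivalence relation R
    set R : Set (A × A) := {p : A × A | ∀ i, p.1 ∈ C i ↔ p.2 ∈ C i} with hRdef
    have hRopen : IsOpen R := by
      have : R = ⋂ i, ((C i ×ˢ C i) ∪ ((C i)ᶜ ×ˢ (C i)ᶜ)) := by
        ext p
        simp only [hRdef, mem_setOf_eq, mem_iInter, mem_union, mem_prod, mem_compl_iff]
        constructor
        · intro h i
          by_cases hp : p.1 ∈ C i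
          · exact Or.inl ⟨hp, (h i).1 hp⟩
          · exact Or.inr ⟨hp, fun hq => hp ((h i).2 hq)⟩
        · intro h i
          rcases h i with ⟨h1, h2⟩ | ⟨h1, h2⟩
          · exact ⟨fun _ => h2, fun _ => h1⟩
          · exact ⟨fun hq => absurd hq h1, fun hq => absurd hq h2⟩
      rw [this]
      exact isOpen_iInter_of_finite fun i =>
        ((hCclopen i).2.prod (hCclopen i).2).union
          ((hCclopen i).1.isOpen_compl.prod (hCclopen i).1.isOpen_compl)
    have hRmem : R ∈ 𝓤 A := by
      rw [← nhdsSet_diagonal_eq_uniformity]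
      exact hRopen.mem_nhdsSet.2 (by rintro ⟨a, b⟩ (rfl : a = b); exact fun i => Iff.rfl)
    -- equicontinuity entourage for R
    obtain ⟨V, hV, hVR⟩ := (hUE R hRmem).exists_mem
    -- the congruence Θ
    set Θ : A → A → Prop := fun a b => ∀ f : A → A, InTransMonoid E f → (f a, f b) ∈ R with hΘdef
    have hRsymm : ∀ {p : A × A}, p ∈ R → (p.2, p.1) ∈ R := fun hp i => (hp i).symm
    have hRtrans : ∀ {a b c : A}, (a, b) ∈ R → (b, c) ∈ R → (a, c) ∈ R :=
      fun h1 h2 i => (h1 i).trans (h2 i)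
    have hΘequiv : Equivalence Θ :=
      ⟨fun a f _ => fun i => Iff.rfl,
       fun h f hf => hRsymm (h f hf),
       fun h1 h2 f hf => hRtrans (h1 f hf) (h2 f hf)⟩
    have hΘtc : ∀ {a b : A} {g : A → A}, Θ a b → IsTranslation E g → Θ (g a) (g b) :=
      fun {a b g} h hg f hf => h (f ∘ g) (InTransMonoid.comp_right hf hg)
    have hcong : ∀ (n : ℕ) (ω : Ω n) (a b : Fin n → A),
        (∀ i, Θ (a i) (b i)) → Θ (E n ω a) (E n ω b) := by
      intro n ω a b hab
      have key : ∀ k : ℕ, Θ (E n ω a) (E n ω fun j => if j.val < k then b j else a j) := by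
        intro k
        induction k with
        | zero =>
          have h0 : (fun j : Fin n => if j.val < 0 then b j else a j) = a := by
            funext j; simp
          rw [h0]; exact hΘequiv.refl _
        | succ k ih =>
          by_cases hk : k < n
          · set i : Fin n := ⟨k, hk⟩ with hi
            set c : Fin n → A := fun j => if j.val < k then b j else a j with hc
            have h1 : Function.update c i (a i) = c := by
              funext j
              rcases eq_or_ne j i with h | h
              · subst h; simp [hc, hi]
              · rw [Function.update_of_ne h]
            have h2 : (fun j : Fin n => if j.val < k + 1 then b j else a j)
                = Function.update c i (b i) := by
              funext j
              rcases eq_or_ne j i with h | h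
              · subst h; simp [hi]
              · have hjk : (j : ℕ) ≠ k := fun hh => h (Fin.ext (by simp [hi, hh]))
                rw [Function.update_of_ne h]
                show _ = if (j : ℕ) < k then b j else a j
                by_cases hlt : (j : ℕ) < k
                · rw [if_pos hlt, if_pos (Nat.lt_succ_of_lt hlt)]
                · rw [if_neg hlt, if_neg (by omega)]
            have hstep : Θ (E n ω (Function.update c i (a i)))
                (E n ω (Function.update c i (b i))) :=
              hΘtc (hab i) ⟨n, ω, i, c, rfl⟩
            rw [h1] at hstep
            rw [h2]
            exact hΘequiv.trans ih hstep
          · have heq : (fun j : Fin n => if j.val < k + 1 then b j else a j)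
                = fun j : Fin n => if j.val < k then b j else a j := by
              funext j
              have hj : (j : ℕ) < k := lt_of_lt_of_le j.isLt (le_of_not_gt hk)
              rw [if_pos hj, if_pos (Nat.lt_succ_of_lt hj)]
            rw [heq]; exact ih
      have hb : (fun j : Fin n => if j.val < n then b j else a j) = b := by
        funext j; rw [if_pos j.isLt]
      rw [← hb]; exact key n
    -- classes of Θ are open
    have hclass_open : ∀ a : A, IsOpen {b | Θ a b} := by
      intro a
      rw [isOpen_iff_mem_nhds]
      intro b hb
      have hball : {c | (b, c) ∈ V} ∈ 𝓝 b := mem_nhds_left b hV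
      filter_upwards [hball] with c hc f hf
      exact hRtrans (hb f hf) (hVR (b, c) hc ⟨f, hf⟩)
    -- the finite quotient
    let s : Setoid A := ⟨Θ, hΘequiv⟩
    have hpre : ∀ a : A, Quotient.mk s ⁻¹' {Quotient.mk s a} = {b | Θ a b} := by
      intro a; ext b
      simp only [mem_preimage, mem_singleton_iff, mem_setOf_eq, Quotient.eq]
      exact ⟨fun h => hΘequiv.symm h, fun h => hΘequiv.symm h⟩
    have hsing : ∀ q : Quotient s, IsOpen ({q} : Set (Quotient s)) := by
      refine Quotient.ind fun a => ?_
      rw [← (isQuotientMap_quotient_mk' (s := s)).isOpen_preimage]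
      have h' : (Quotient.mk' : A → Quotient s) ⁻¹' {Quotient.mk s a} = {b | Θ a b} := hpre a
      rw [h']
      exact hclass_open a
    haveI hdisc : DiscreteTopology (Quotient s) := discreteTopology_iff_isOpen_singleton.2 hsing
    haveI : CompactSpace (Quotient s) := Quotient.compactSpace
    haveI hfin : Finite (Quotient s) := finite_of_compact_of_discrete
    have hout : ∀ a : A, Θ a (Quotient.mk s a).out :=
      fun a => hΘequiv.symm (Quotient.mk_out a)
    refine ⟨{ B := Quotient s
              discB := hdisc
              op := fun n ω b => Quotient.mk s (E n ω fun i => (b i).out)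
              contOp := ?_
              toFun := Quotient.mk s
              cont := continuous_quot_mk
              hom := ?_ }, ?_⟩
    · intro n
      exact continuous_quot_mk.comp ((hE n).comp (continuous_fst.prodMk
        ((continuous_of_discreteTopology
          (f := fun b : Fin n → Quotient s => fun i => (b i).out)).comp continuous_snd)))
    · intro n ω a
      exact Quotient.sound (hcong n ω a (fun i => (Quotient.mk s (a i)).out)
        (fun i => hout (a i)))
    · intro h
      have hΘxy : Θ x y := Quotient.exact h
      have hR : ((x, y) : A × A) ∈ R := hΘxy (fun z => z) InTransMonoid.id
      exact hCsub (x, y) hR rfl
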